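/- Let h_1, …, h_n be real numbers, not all equal, with min_i h_i < 0 < max_i h_i. Then the supremum of Π_{i=1}^n p_i over probability vectors (p_i ≥ 0, Σ p_i = 1) subject to Σ_i p_i h_i = 0 is attained, and at the maximizer p_i = (1/n)·1/(1 + λ h_i) for a Lagrange multiplier λ ∈ ℝ satisfying Σ_{i=1}^n h_i/(1 + λ h_i) = 0. -/

import Mathlib

open Finset

/-- AM-GM consequence: nonneg reals summing to `n` have product at most 1. -/
lemma amgm_prod_le_one (n : ℕ) (hn : 0 < n) (x : Fin n → ℝ)
    (hx : ∀ i, 0 ≤ x i) (hs : ∑ i, x i = n) : ∏ i, x i ≤ 1 := by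
  have hn' : (0:ℝ) < n := by exact_mod_cast hn
  have hw : ∀ i ∈ (univ : Finset (Fin n)), (0:ℝ) ≤ (n:ℝ)⁻¹ := fun _ _ => by positivity
  have hw' : ∑ _i ∈ (univ : Finset (Fin n)), (n:ℝ)⁻¹ = 1 := by
    simp [Finset.card_univ]
    field_simp
  have key := Real.geom_mean_le_arith_mean_weighted univ (fun _ => (n:ℝ)⁻¹) x hw hw'
    (fun i _ => hx i)
  have hsum : ∑ i, (n:ℝ)⁻¹ * x i = 1 := by
    rw [← Finset.mul_sum, hs]
    field_simp
  rw [hsum] at key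
  -- key : ∏ i, x i ^ (n:ℝ)⁻¹ ≤ 1
  have h1 : (∏ i, x i ^ ((n:ℝ)⁻¹)) ^ (n:ℕ) ≤ 1 := by
    have hnn : 0 ≤ ∏ i, x i ^ ((n:ℝ)⁻¹) :=
      Finset.prod_nonneg fun i _ => Real.rpow_nonneg (hx i) _
    calc (∏ i, x i ^ ((n:ℝ)⁻¹)) ^ (n:ℕ) ≤ 1 ^ (n:ℕ) := pow_le_pow_left₀ hnn key n
    _ = 1 := one_pow n
  have h2 : (∏ i, x i ^ ((n:ℝ)⁻¹)) ^ (n:ℕ) = ∏ i, x i := by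
    rw [← Finset.prod_pow]
    refine Finset.prod_congr rfl fun i _ => ?_
    rw [← Real.rpow_natCast (x i ^ ((n:ℝ)⁻¹)) n, ← Real.rpow_mul (hx i)]
    rw [inv_mul_cancel₀ (ne_of_gt hn'), Real.rpow_one]
  rwa [h2] at h1

/-- If some `h i` is positive, there is a nonpositive `lam` keeping all `1 + lam * h i`
positive with `∑ h i / (1 + lam * h i) > 0`. -/
lemma exists_lam_pos (n : ℕ) (hn : 0 < n) (h : Fin n → ℝ) (hpos : ∃ i, 0 < h i) :
    ∃ lam : ℝ, lam ≤ 0 ∧ (∀ i, 0 < 1 + lam * h i) ∧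
      0 < ∑ i, h i / (1 + lam * h i) := by
  -- take i0 maximizing h
  obtain ⟨i0, -, hmax⟩ := Finset.exists_max_image (univ : Finset (Fin n)) h ⟨hpos.choose, mem_univ _⟩
  set M := h i0 with hM
  have hMpos : 0 < M := lt_of_lt_of_le hpos.choose_spec (hmax _ (mem_univ _))
  set B : ℝ := ∑ i, |h i| with hB
  have hBM : M ≤ B := by
    calc M = |h i0| := (abs_of_pos hMpos).symm
    _ ≤ B := Finset.single_le_sum (fun i _ => abs_nonneg (h i)) (mem_univ i0)
  have hBpos : 0 < B := lt_of_lt_of_le hMpos hBM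
  set d0 : ℝ := M / (2 * B) with hd0
  have hd0pos : 0 < d0 := by positivity
  have hd0lt : d0 < 1 := by
    rw [hd0, div_lt_one (by positivity)]
    linarith
  refine ⟨(d0 - 1) / M, ?_, ?_, ?_⟩
  · apply div_nonpos_of_nonpos_of_nonneg <;> linarith
  · intro i
    rcases le_or_gt (h i) 0 with hhi | hhi
    · have : 0 ≤ (d0 - 1) / M * h i :=
        mul_nonneg_of_nonpos_of_nonpos (by apply div_nonpos_of_nonpos_of_nonneg <;> linarith) hhi
      linarith
    · have hle : h i ≤ M := hmax i (mem_univ i)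
      have : (d0 - 1) / M * M ≤ (d0 - 1) / M * h i := by
        apply mul_le_mul_of_nonpos_left hle
        apply div_nonpos_of_nonpos_of_nonneg <;> linarith
      have hMM : (d0 - 1) / M * M = d0 - 1 := by field_simp
      rw [hMM] at this
      linarith
  · -- the sum is at least M/d0 - B = 2B - B > 0
    have hden : ∀ i, 0 < 1 + (d0 - 1) / M * h i := by
      intro i
      rcases le_or_gt (h i) 0 with hhi | hhi
      · have : 0 ≤ (d0 - 1) / M * h i :=
          mul_nonneg_of_nonpos_of_nonpos (by apply div_nonpos_of_nonpos_of_nonneg <;> linarith) hhi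
        linarith
      · have hle : h i ≤ M := hmax i (mem_univ i)
        have : (d0 - 1) / M * M ≤ (d0 - 1) / M * h i := by
          apply mul_le_mul_of_nonpos_left hle
          apply div_nonpos_of_nonpos_of_nonneg <;> linarith
        have hMM : (d0 - 1) / M * M = d0 - 1 := by field_simp
        rw [hMM] at this
        linarith
    have hterm : ∀ i, -|h i| ≤ h i / (1 + (d0 - 1) / M * h i) := by
      intro i
      rcases le_or_gt (h i) 0 with hhi | hhi
      · -- denominator ≥ 1, h i ≤ 0
        have hd1 : 1 ≤ 1 + (d0 - 1) / M * h i := by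
          have : 0 ≤ (d0 - 1) / M * h i :=
            mul_nonneg_of_nonpos_of_nonpos (by apply div_nonpos_of_nonpos_of_nonneg <;> linarith) hhi
          linarith
        rw [le_div_iff₀ (hden i)]
        have habs : -|h i| = h i := by rw [abs_of_nonpos hhi]; ring
        rw [habs]
        nlinarith
      · have : 0 ≤ h i / (1 + (d0 - 1) / M * h i) := le_of_lt (div_pos hhi (hden i))
        have : -|h i| ≤ 0 := neg_nonpos_of_nonneg (abs_nonneg _)
        linarith
    have hi0term : h i0 / (1 + (d0 - 1) / M * h i0) = 2 * B := by
      have : 1 + (d0 - 1) / M * h i0 = d0 := by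
        rw [← hM]; field_simp; ring
      rw [this, ← hM, hd0]
      field_simp
    have hsplit : ∑ i, h i / (1 + (d0 - 1) / M * h i)
        = h i0 / (1 + (d0 - 1) / M * h i0)
          + ∑ i ∈ univ.erase i0, h i / (1 + (d0 - 1) / M * h i) := by
      rw [← Finset.add_sum_erase _ _ (mem_univ i0)]
    have hrest : -B ≤ ∑ i ∈ univ.erase i0, h i / (1 + (d0 - 1) / M * h i) := by
      have h1 : ∑ i ∈ univ.erase i0, -|h i| ≤
          ∑ i ∈ univ.erase i0, h i / (1 + (d0 - 1) / M * h i) :=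
        Finset.sum_le_sum fun i _ => hterm i
      have h2 : -B ≤ ∑ i ∈ univ.erase i0, -|h i| := by
        rw [Finset.sum_neg_distrib]
        have : ∑ i ∈ univ.erase i0, |h i| ≤ B :=
          Finset.sum_le_sum_of_subset_of_nonneg (Finset.subset_univ _)
            (fun i _ _ => abs_nonneg _)
        linarith
      linarith
    rw [hsplit, hi0term]
    linarith

/-- Empirical likelihood: if the `h i` are not all equal and `0` lies strictly between
`min h` and `max h`, the constrained supremum of `∏ p i` is attained at a maximizer of
the Lagrange form `p i = (1/n) / (1 + λ h i)` with `∑ h i / (1 + λ h i) = 0`. -/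
theorem empirical_likelihood_lagrange (n : ℕ) (hn : 0 < n) (h : Fin n → ℝ)
    (hne : ∃ i j, h i ≠ h j)
    (hneg : ∃ i, h i < 0) (hpos : ∃ i, 0 < h i) :
    ∃ p : Fin n → ℝ,
      (∀ i, 0 ≤ p i) ∧ (∑ i, p i = 1) ∧ (∑ i, p i * h i = 0) ∧
      (∀ q : Fin n → ℝ, (∀ i, 0 ≤ q i) → (∑ i, q i = 1) → (∑ i, q i * h i = 0) →
        ∏ i, q i ≤ ∏ i, p i) ∧
      ∃ lam : ℝ, (∀ i, p i = (1 / n) * (1 / (1 + lam * h i))) ∧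
        (∑ i, h i / (1 + lam * h i) = 0) := by
  have hn' : (0:ℝ) < n := by exact_mod_cast hn
  -- endpoints for IVT
  obtain ⟨l1, hl1le, hl1den, hl1pos⟩ := exists_lam_pos n hn h hpos
  obtain ⟨l2', hl2'le, hl2'den, hl2'pos⟩ := exists_lam_pos n hn (fun i => -(h i))
    ⟨hneg.choose, by simpa using hneg.choose_spec⟩
  set l2 : ℝ := -l2' with hl2
  have hl2den : ∀ i, 0 < 1 + l2 * h i := by
    intro i; have := hl2'den i; rw [hl2]; ring_nf; ring_nf at this; linarith
  have hl2neg : ∑ i, h i / (1 + l2 * h i) < 0 := by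
    have : 0 < ∑ i, -(h i) / (1 + l2' * -(h i)) := hl2'pos
    have heq : ∑ i, -(h i) / (1 + l2' * -(h i)) = -∑ i, h i / (1 + l2 * h i) := by
      rw [← Finset.sum_neg_distrib]
      refine Finset.sum_congr rfl fun i _ => ?_
      rw [hl2]; ring_nf
    rw [heq] at this
    linarith
  have hl12 : l1 ≤ l2 := le_trans hl1le (by rw [hl2]; linarith)
  -- all denominators positive on the interval [l1, l2]
  have hdenIcc : ∀ x ∈ Set.Icc l1 l2, ∀ i, 0 < 1 + x * h i := by
    rintro x ⟨hx1, hx2⟩ i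
    rcases le_or_gt 0 (h i) with hhi | hhi
    · have := hl1den i; nlinarith
    · have := hl2den i; nlinarith
  -- continuity of f on [l1, l2]
  set f : ℝ → ℝ := fun x => ∑ i, h i / (1 + x * h i) with hf
  have hcont : ContinuousOn f (Set.Icc l1 l2) := by
    apply continuousOn_finset_sum
    intro i _
    apply ContinuousOn.div
    · exact continuousOn_const
    · exact (continuousOn_const.add (continuousOn_id.mul continuousOn_const))
    · intro x hx
      exact ne_of_gt (hdenIcc x hx i)
  -- IVT
  have hivt : (0:ℝ) ∈ f '' Set.Icc l1 l2 := by
    apply intermediate_value_Icc' hl12 hcont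
    constructor
    · exact le_of_lt hl2neg
    · exact le_of_lt hl1pos
  obtain ⟨lam, hlamIcc, hlam0⟩ := hivt
  have hden : ∀ i, 0 < 1 + lam * h i := hdenIcc lam hlamIcc
  -- define p
  set p : Fin n → ℝ := fun i => (1 / n) * (1 / (1 + lam * h i)) with hp
  have hppos : ∀ i, 0 < p i := fun i =>
    mul_pos (by positivity) (one_div_pos.mpr (hden i))
  -- key identities
  have hsum0 : ∑ i, h i / (1 + lam * h i) = 0 := hlam0
  have hsum1 : ∑ i, 1 / (1 + lam * h i) = n := by
    have hpt : ∀ i, 1 / (1 + lam * h i) = 1 - lam * (h i / (1 + lam * h i)) := by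
      intro i
      field_simp [(hden i).ne']
      ring
    calc ∑ i, 1 / (1 + lam * h i) = ∑ i, (1 - lam * (h i / (1 + lam * h i))) :=
          Finset.sum_congr rfl fun i _ => hpt i
    _ = (n : ℝ) - lam * ∑ i, h i / (1 + lam * h i) := by
          rw [Finset.sum_sub_distrib, ← Finset.mul_sum]
          simp [Finset.card_univ]
    _ = n := by rw [hsum0]; ring
  have hpsum : ∑ i, p i = 1 := by
    rw [hp]
    simp only
    rw [← Finset.mul_sum, hsum1]
    field_simp
  have hph : ∑ i, p i * h i = 0 := by
    have : ∀ i, p i * h i = (1 / n) * (h i / (1 + lam * h i)) := by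
      intro i; rw [hp]; field_simp
    calc ∑ i, p i * h i = ∑ i, (1 / n) * (h i / (1 + lam * h i)) :=
          Finset.sum_congr rfl fun i _ => this i
    _ = (1 / n) * ∑ i, h i / (1 + lam * h i) := by rw [Finset.mul_sum]
    _ = 0 := by rw [hsum0]; ring
  refine ⟨p, fun i => le_of_lt (hppos i), hpsum, hph, ?_, lam, fun i => rfl, hsum0⟩
  -- maximality
  intro q hq hq1 hqh
  set r : Fin n → ℝ := fun i => q i * (n * (1 + lam * h i)) with hr
  have hrnn : ∀ i, 0 ≤ r i := fun i =>
    mul_nonneg (hq i) (mul_nonneg (le_of_lt hn') (le_of_lt (hden i)))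
  have hrsum : ∑ i, r i = n := by
    have : ∀ i, r i = n * q i + (n * lam) * (q i * h i) := fun i => by rw [hr]; ring
    calc ∑ i, r i = ∑ i, (n * q i + (n * lam) * (q i * h i)) :=
          Finset.sum_congr rfl fun i _ => this i
    _ = n * (∑ i, q i) + (n * lam) * (∑ i, q i * h i) := by
          rw [Finset.sum_add_distrib, ← Finset.mul_sum, ← Finset.mul_sum]
    _ = n := by rw [hq1, hqh]; ring
  have hqr : ∀ i, q i = p i * r i := by
    intro i
    rw [hp, hr]
    field_simp [(hden i).ne', hn'.ne']
  have hprod : ∏ i, q i = (∏ i, p i) * ∏ i, r i := by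
    rw [← Finset.prod_mul_distrib]
    exact Finset.prod_congr rfl fun i _ => hqr i
  have hr1 : ∏ i, r i ≤ 1 := amgm_prod_le_one n hn r hrnn hrsum
  have hpprod : 0 < ∏ i, p i := Finset.prod_pos fun i _ => hppos i
  rw [hprod]
  nlinarith
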